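/- Let Ω be a metrizable topological space, let μ be a finite Borel measure on Ω, and let (A_i)_{i∈I} be a finite Borel partition of Ω. Then there exists a family (f_i^k)_{i∈I, k∈ℕ} of continuous functions f_i^k : Ω → ℝ with 0 ≤ f_i^k ≤ 1 and Σ_{i∈I} f_i^k = 1 for every k, such that for each i ∈ I, f_i^k converges to the indicator function 1_{A_i} μ-almost everywhere as k → ∞. -/

import Mathlib

open Set Filter MeasureTheory Topology
open scoped ENNReal

lemma stmt8_aux {Ω : Type*} [TopologicalSpace Ω] [TopologicalSpace.MetrizableSpace Ω]
    [MeasurableSpace Ω] [BorelSpace Ω]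
    (μ : Measure Ω) [IsFiniteMeasure μ] {A : Set Ω} (hA : MeasurableSet A) :
    ∃ g : ℕ → C(Ω, ℝ), (∀ k x, g k x ∈ Icc (0:ℝ) 1) ∧
      ∀ᵐ x ∂μ, Tendsto (fun k => g k x) atTop (𝓝 (A.indicator (1 : Ω → ℝ) x)) := by
  letI := TopologicalSpace.metrizableSpaceMetric Ω
  have h1 : ∀ k : ℕ, ∃ g : C(Ω, ℝ), (∀ x, g x ∈ Icc (0:ℝ) 1) ∧
      μ {x | g x ≠ A.indicator (1 : Ω → ℝ) x} ≤ (2:ℝ≥0∞)⁻¹ ^ k := by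
    intro k
    have hε : ((2:ℝ≥0∞)⁻¹ * 2⁻¹ ^ k) ≠ 0 := by
      simp [pow_ne_zero]
    obtain ⟨F, hFA, hFc, hF⟩ := hA.exists_isClosed_diff_lt (measure_ne_top μ A) hε
    obtain ⟨U, hAU, hUo, -, hU⟩ := hA.exists_isOpen_diff_lt (measure_ne_top μ A) hε
    have hd : Disjoint Uᶜ F := by
      rw [disjoint_compl_left_iff_subset]
      exact hFA.trans hAU
    obtain ⟨g, hg0, hg1, hgI⟩ := exists_continuous_zero_one_of_isClosed
      hUo.isClosed_compl hFc hd
    refine ⟨g, hgI, ?_⟩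
    have hsub : {x | g x ≠ A.indicator (1 : Ω → ℝ) x} ⊆ (U \ A) ∪ (A \ F) := by
      intro x hx
      by_contra hx'
      simp only [mem_union, mem_diff, not_or, not_and, not_not] at hx'
      obtain ⟨h1', h2'⟩ := hx'
      by_cases hxA : x ∈ A
      · have hxF : x ∈ F := h2' hxA
        exact hx (by simp [hg1 hxF, indicator_of_mem hxA])
      · have hxU : x ∉ U := fun h => hxA (h1' h)
        exact hx (by simp [hg0 (mem_compl hxU), indicator_of_notMem hxA])
    calc μ {x | g x ≠ A.indicator (1 : Ω → ℝ) x} ≤ μ ((U \ A) ∪ (A \ F)) :=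
          measure_mono hsub
      _ ≤ μ (U \ A) + μ (A \ F) := measure_union_le _ _
      _ ≤ 2⁻¹ * 2⁻¹ ^ k + 2⁻¹ * 2⁻¹ ^ k := add_le_add hU.le hF.le
      _ = 2⁻¹ ^ k := by
          rw [← two_mul, ← mul_assoc, ENNReal.mul_inv_cancel (by norm_num) (by norm_num),
            one_mul]
  choose g hgI hgμ using h1
  refine ⟨g, hgI, ?_⟩
  have htsum : (∑' k, μ {x | g k x ≠ A.indicator (1 : Ω → ℝ) x}) ≠ ∞ := by
    refine ne_top_of_le_ne_top ?_ (ENNReal.tsum_le_tsum hgμ)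
    rw [ENNReal.tsum_geometric, ENNReal.one_sub_inv_two]
    simp
  filter_upwards [ae_eventually_notMem htsum] with x hx
  refine Tendsto.congr' ?_ tendsto_const_nhds
  filter_upwards [hx] with k hk
  simpa using (not_not.mp hk).symm

/-- On a metrizable space with a finite Borel measure, for every finite Borel partition
`(A_i)` there is a family `(f_i^k)` of continuous `[0,1]`-valued functions with
`Σ_i f_i^k = 1` such that for each `i`, `f_i^k → 1_{A_i}` `μ`-a.e. as `k → ∞`. -/
theorem stmt8 {Ω : Type*} [TopologicalSpace Ω] [TopologicalSpace.MetrizableSpace Ω]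
    [MeasurableSpace Ω] [BorelSpace Ω]
    (μ : Measure Ω) [IsFiniteMeasure μ]
    {I : Type*} [Fintype I] (A : I → Set Ω)
    (hmeas : ∀ i, MeasurableSet (A i))
    (hdisj : Pairwise (Function.onFun Disjoint A))
    (hcover : ⋃ i, A i = univ) :
    ∃ f : I → ℕ → C(Ω, ℝ),
      (∀ i k x, f i k x ∈ Icc (0:ℝ) 1) ∧
      (∀ k x, ∑ i, f i k x = 1) ∧
      ∀ i, ∀ᵐ x ∂μ, Tendsto (fun k => f i k x) atTop (𝓝 ((A i).indicator (1 : Ω → ℝ) x)) := by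
  rcases isEmpty_or_nonempty I with hI | hI
  · -- Ω is empty
    have hΩ : IsEmpty Ω := by
      rw [← not_nonempty_iff]
      rintro ⟨x⟩
      obtain ⟨i, -⟩ := mem_iUnion.mp (hcover.symm ▸ mem_univ x)
      exact isEmptyElim i
    exact ⟨fun i => isEmptyElim i, fun i => isEmptyElim i, fun k x => isEmptyElim x,
      fun i => isEmptyElim i⟩
  · choose g hgI hgae using fun i => stmt8_aux μ (hmeas i)
    set ε : ℕ → ℝ := fun k => 1 / (k + 1) with hε
    have hεpos : ∀ k, 0 < ε k := fun k => by positivity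
    set S : ℕ → Ω → ℝ := fun k x => ∑ j, (g j k x + ε k) with hS
    have hSpos : ∀ k x, 0 < S k x :=
      fun k x => Finset.sum_pos
        (fun j _ => add_pos_of_nonneg_of_pos (hgI j k x).1 (hεpos k)) ⟨hI.some, by simp⟩
    refine ⟨fun i k => ⟨fun x => (g i k x + ε k) / S k x, ?_⟩, ?_, ?_, ?_⟩
    · exact Continuous.div (by continuity)
        (continuous_finset_sum _ fun j _ => by continuity) (fun x => (hSpos k x).ne')
    · intro i k x
      simp only [ContinuousMap.coe_mk]
      constructor
      · exact div_nonneg (add_nonneg (hgI i k x).1 (hεpos k).le) (hSpos k x).le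
      · rw [div_le_one (hSpos k x)]
        exact Finset.single_le_sum
          (fun j _ => add_nonneg (hgI j k x).1 (hεpos k).le) (Finset.mem_univ i)
    · intro k x
      simp only [ContinuousMap.coe_mk]
      rw [← Finset.sum_div, div_self (hSpos k x).ne']
    · intro i
      filter_upwards [(ae_all_iff.mpr hgae : ∀ᵐ x ∂μ, ∀ j,
        Tendsto (fun k => g j k x) atTop (𝓝 ((A j).indicator (1 : Ω → ℝ) x)))] with x hx
      simp only [ContinuousMap.coe_mk]
      have hε0 : Tendsto ε atTop (𝓝 0) := tendsto_one_div_add_atTop_nhds_zero_nat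
      have hnum : Tendsto (fun k => g i k x + ε k) atTop
          (𝓝 ((A i).indicator (1 : Ω → ℝ) x)) := by
        simpa using (hx i).add hε0
      have hsum1 : ∑ j, (A j).indicator (1 : Ω → ℝ) x = 1 := by
        obtain ⟨i₀, hi₀⟩ := mem_iUnion.mp (hcover.symm ▸ mem_univ x)
        rw [Finset.sum_eq_single_of_mem i₀ (Finset.mem_univ i₀)]
        · simp [indicator_of_mem hi₀]
        · intro j _ hj
          have : x ∉ A j := fun hxj => (hdisj hj).ne_of_mem hxj hi₀ rfl
          simp [indicator_of_notMem this]
      have hden : Tendsto (fun k => S k x) atTop (𝓝 1) := by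
        rw [← hsum1]
        refine tendsto_finset_sum _ fun j _ => ?_
        simpa using (hx j).add hε0
      have := hnum.div hden one_ne_zero
      simp only [div_one] at this
      exact this
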